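/- arXiv:2005.07866 — 7 statements merged into one kernel-verified Lean document; each statement's English description precedes it below -/
import Mathlib

section
/- Let (Ω, P) be a probability space, let d, R be positive integers, let ε, ε' > 0 with ε + ε' < 1, and let σ, b, κ > 0. Suppose μ_1, …, μ_R ∈ ℝ^d satisfy the gradient-dissimilarity bound ‖μ_r − (1/R)∑_{j=1}^R μ_j‖ ≤ κ for every r ∈ {1,…,R}. Let H ⊆ {1,…,R} with |H| ≥ (1−ε)R, and let (g_r)_{r∈H} be independent, square-integrable random vectors in ℝ^d with E[g_r] = μ_r and E[‖g_r − μ_r‖²] ≤ σ²/b for every r ∈ H. Then with probability at least 1 − exp(−ε'²(1−ε)R/16) there exists a subset S ⊆ H with |S| ≥ (1−(ε+ε'))R such that for every unit vector v ∈ ℝ^d, (1/|S|) ∑_{i∈S} ⟨g_i − g_S, v⟩² ≤ (24σ²/(bε'))·(1 + d/((1−(ε+ε'))R)) + 16κ², where g_S = (1/|S|) ∑_{i∈S} g_i is the sample mean of the selected gradients. -/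
open MeasureTheory ProbabilityTheory
open scoped RealInnerProductSpace BigOperators ENNReal

/-- independence is preserved by a.e. modification -/
lemma my_iIndepFun_ae_congr {Ω ι : Type*} [MeasurableSpace Ω] {P : Measure Ω}
    {β : ι → Type*} [m : ∀ i, MeasurableSpace (β i)] {f f' : ∀ i, Ω → β i}
    (h : iIndepFun f P) (hff' : ∀ i, f i =ᵐ[P] f' i) : iIndepFun f' P := by
  rw [iIndepFun_iff_measure_inter_preimage_eq_mul] at h ⊢
  intro S sets hsets
  have hpre : ∀ i, f i ⁻¹' sets i =ᵐ[P] f' i ⁻¹' sets i := fun i => by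
    refine Filter.eventuallyEq_set.2 ?_
    filter_upwards [hff' i] with ω hω
    simp [Set.mem_preimage, hω]
  have h1 : (⋂ i ∈ S, f' i ⁻¹' sets i) =ᵐ[P] (⋂ i ∈ S, f i ⁻¹' sets i) := by
    refine Filter.eventuallyEq_set.2 ?_
    have : ∀ᵐ ω ∂P, ∀ i ∈ S, f i ω = f' i ω := by
      exact (MeasureTheory.ae_ball_iff S.countable_toSet).2 fun i _ => hff' i
    filter_upwards [this] with ω hω
    simp only [Set.mem_iInter, Set.mem_preimage]
    exact ⟨fun h' i hi => (hω i hi) ▸ h' i hi, fun h' i hi => (hω i hi).symm ▸ h' i hi⟩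
  rw [measure_congr h1, h S hsets]
  exact Finset.prod_congr rfl fun i _ => measure_congr (hpre i)

/-- the mean minimizes the sum of squared distances -/
lemma my_sum_sq_mean_le {ι E : Type*} [NormedAddCommGroup E] [InnerProductSpace ℝ E]
    (S : Finset ι) (hS : S.Nonempty) (x : ι → E) (c : E) :
    ∑ i ∈ S, ‖x i - (S.card : ℝ)⁻¹ • ∑ j ∈ S, x j‖ ^ 2 ≤ ∑ i ∈ S, ‖x i - c‖ ^ 2 := by
  set m : E := (S.card : ℝ)⁻¹ • ∑ j ∈ S, x j with hm_def
  have hcard : (S.card : ℝ) ≠ 0 := by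
    exact_mod_cast (Finset.card_pos.2 hS).ne'
  have hm : ∑ i ∈ S, (x i - m) = 0 := by
    rw [Finset.sum_sub_distrib, Finset.sum_const, sub_eq_zero, ← Nat.cast_smul_eq_nsmul ℝ,
      hm_def, smul_smul, mul_inv_cancel₀ hcard, one_smul]
  have key : ∀ i ∈ S, ‖x i - c‖ ^ 2 = ‖x i - m‖ ^ 2 + (2 * ⟪x i - m, m - c⟫ + ‖m - c‖ ^ 2) := by
    intro i _
    have hx : x i - c = (x i - m) + (m - c) := by abel
    rw [hx, norm_add_sq_real]; ring
  have hsum : ∑ i ∈ S, ‖x i - c‖ ^ 2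
      = ∑ i ∈ S, ‖x i - m‖ ^ 2 + (S.card : ℝ) * ‖m - c‖ ^ 2 := by
    rw [Finset.sum_congr rfl key, Finset.sum_add_distrib, Finset.sum_add_distrib]
    have h2 : ∑ i ∈ S, 2 * ⟪x i - m, m - c⟫ = 0 := by
      rw [← Finset.mul_sum, ← sum_inner, hm, inner_zero_left, mul_zero]
    rw [h2, Finset.sum_const, nsmul_eq_mul]
    ring
  nlinarith [mul_nonneg (Nat.cast_nonneg (α := ℝ) S.card) (sq_nonneg ‖m - c‖)]

set_option maxHeartbeats 2000000 in
/-- **Matrix concentration for heterogeneous stochastic gradients**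
(first part of the robust gradient estimation theorem). -/
theorem stmt_0
    (Ω : Type*) [MeasurableSpace Ω] (P : Measure Ω) [IsProbabilityMeasure P]
    (d R : ℕ) (hd : 0 < d) (hR : 0 < R)
    (ε ε' : ℝ) (hε : 0 < ε) (hε' : 0 < ε') (hεsum : ε + ε' < 1)
    (σ b κ : ℝ) (hσ : 0 < σ) (hb : 0 < b) (hκ : 0 < κ)
    (μ : Fin R → EuclideanSpace ℝ (Fin d))
    (hdissim : ∀ r, ‖μ r - (R : ℝ)⁻¹ • ∑ j, μ j‖ ≤ κ)
    (H : Finset (Fin R)) (hH : (1 - ε) * R ≤ H.card)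
    (g : Fin R → Ω → EuclideanSpace ℝ (Fin d))
    (hindep : iIndepFun (fun r : H => g r.1) P)
    (hL2 : ∀ r ∈ H, MemLp (g r) 2 P)
    (hmean : ∀ r ∈ H, ∫ ω, g r ω ∂P = μ r)
    (hvar : ∀ r ∈ H, ∫ ω, ‖g r ω - μ r‖ ^ 2 ∂P ≤ σ ^ 2 / b) :
    ENNReal.ofReal (1 - Real.exp (-(ε' ^ 2 * (1 - ε) * R) / 16)) ≤
      P {ω | ∃ S : Finset (Fin R), S ⊆ H ∧ (1 - (ε + ε')) * R ≤ S.card ∧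
        ∀ v : EuclideanSpace ℝ (Fin d), ‖v‖ = 1 →
          (S.card : ℝ)⁻¹ * ∑ i ∈ S, ⟪g i ω - (S.card : ℝ)⁻¹ • ∑ j ∈ S, g j ω, v⟫ ^ 2 ≤
            24 * σ ^ 2 / (b * ε') * (1 + d / ((1 - (ε + ε')) * R)) + 16 * κ ^ 2} := by
  classical
  have hε'1 : ε' < 1 := by linarith
  have hs1 : 0 < 1 - (ε + ε') := by linarith
  have hRpos : (0:ℝ) < R := by exact_mod_cast hR
  set T : ℝ := 4 * σ ^ 2 / (b * ε') with hT_def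
  have hT : 0 < T := by positivity
  -- measurable modification of g
  set G : Fin R → Ω → EuclideanSpace ℝ (Fin d) :=
    fun r => if h : r ∈ H then (hL2 r h).1.mk (g r) else g r with hG_def
  have hGmeas : ∀ r ∈ H, Measurable (G r) := by
    intro r hr
    simp only [hG_def, dif_pos hr]
    exact (hL2 r hr).1.stronglyMeasurable_mk.measurable
  have hGae : ∀ r, G r =ᵐ[P] g r := by
    intro r
    by_cases h : r ∈ H
    · simp only [hG_def, dif_pos h]; exact ((hL2 r h).1.ae_eq_mk).symm
    · simp only [hG_def, dif_neg h]
      rfl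
  -- indicator random variables
  set φ : Fin R → EuclideanSpace ℝ (Fin d) → ℝ :=
    fun r y => if T < ‖y - μ r‖ ^ 2 then 1 else 0 with hφ_def
  have hφmeas : ∀ r, Measurable (φ r) := by
    intro r
    have hcont : Continuous (fun y : EuclideanSpace ℝ (Fin d) => ‖y - μ r‖ ^ 2) := by
      continuity
    have : φ r = Set.indicator ((fun y => ‖y - μ r‖ ^ 2) ⁻¹' Set.Ioi T) (fun _ => (1:ℝ)) := by
      funext y; by_cases h : T < ‖y - μ r‖ ^ 2 <;>
        simp [hφ_def, h, Set.indicator, Set.mem_preimage]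
    rw [this]
    exact measurable_const.indicator (hcont.measurable measurableSet_Ioi)
  set X : Fin R → Ω → ℝ := fun r => φ r ∘ G r with hX_def
  have hXmeas : ∀ r ∈ H, Measurable (X r) := fun r hr => (hφmeas r).comp (hGmeas r hr)
  have hX01 : ∀ r ω, X r ω = 0 ∨ X r ω = 1 := by
    intro r ω
    by_cases h : T < ‖G r ω - μ r‖ ^ 2 <;> simp [hX_def, hφ_def, h]
  have hindepX : iIndepFun (fun r : H => X r.1) P := by
    have hindepG : iIndepFun (fun r : H => G r.1) P :=
      my_iIndepFun_ae_congr hindep (fun r => (hGae r.1).symm)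
    exact hindepG.comp (fun r : H => φ r.1) (fun r => hφmeas r.1)
  -- integrability of X and exp(t X)
  have hXint : ∀ r ∈ H, Integrable (X r) P := by
    intro r hr
    refine (integrable_const (1:ℝ)).mono' (hXmeas r hr).aestronglyMeasurable ?_
    filter_upwards with ω
    rcases hX01 r ω with h | h <;> simp [h]
  have hXexpint : ∀ (t : ℝ), ∀ r ∈ H, Integrable (fun ω => Real.exp (t * X r ω)) P := by
    intro t r hr
    refine (integrable_const (max 1 (Real.exp t))).mono'
      (((hXmeas r hr).const_mul t).exp).aestronglyMeasurable ?_
    filter_upwards with ω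
    rw [Real.norm_eq_abs, abs_of_pos (Real.exp_pos _)]
    rcases hX01 r ω with h | h
    · simp [h]
    · simp [h]
  -- Markov: E[X r] ≤ ε'/4
  have hEX : ∀ r ∈ H, ∫ ω, X r ω ∂P ≤ ε' / 4 := by
    intro r hr
    have hint2 : Integrable (fun ω => ‖g r ω - μ r‖ ^ 2) P := by
      have h2 := ((hL2 r hr).sub (memLp_const (μ r))).integrable_norm_rpow two_ne_zero
        ENNReal.ofNat_ne_top
      convert h2 using 2 with ω
      simp only [Pi.sub_apply, ENNReal.toReal_ofNat, Real.rpow_two]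
    have hintG : Integrable (fun ω => ‖G r ω - μ r‖ ^ 2) P := by
      refine hint2.congr ?_
      filter_upwards [hGae r] with ω hω
      rw [hω]
    have hinteq : ∫ ω, ‖G r ω - μ r‖ ^ 2 ∂P ≤ σ ^ 2 / b := by
      rw [integral_congr_ae (g := fun ω => ‖g r ω - μ r‖ ^ 2) (by
        filter_upwards [hGae r] with ω hω
        rw [hω])]
      exact hvar r hr
    have hfmeas : Measurable (fun ω => ‖G r ω - μ r‖ ^ 2) :=
      (((hGmeas r hr).sub measurable_const).norm).pow_const 2
    have markov := mul_meas_ge_le_integral_of_nonneg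
      (ae_of_all P (fun ω => by positivity : ∀ ω, (0:ℝ) ≤ ‖G r ω - μ r‖ ^ 2)) hintG T
    have hXr : ∫ ω, X r ω ∂P = (P {ω | T < ‖G r ω - μ r‖ ^ 2}).toReal := by
      have hXind : X r = Set.indicator {ω | T < ‖G r ω - μ r‖ ^ 2} (fun _ => (1:ℝ)) := by
        funext ω; by_cases h : T < ‖G r ω - μ r‖ ^ 2 <;>
          simp [hX_def, hφ_def, h, Set.indicator]
      rw [hXind, integral_indicator_const _ (measurableSet_lt measurable_const hfmeas),
        smul_eq_mul, mul_one]
      rfl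
    have hmono : (P {ω | T < ‖G r ω - μ r‖ ^ 2}).toReal ≤
        (P {ω | T ≤ ‖G r ω - μ r‖ ^ 2}).toReal := by
      refine ENNReal.toReal_le_toReal (measure_ne_top _ _) (measure_ne_top _ _) |>.2 ?_
      exact measure_mono (fun ω (hω : T < _) => (le_of_lt hω : T ≤ _))
    have hTP : T * (P {ω | T ≤ ‖G r ω - μ r‖ ^ 2}).toReal ≤ σ ^ 2 / b :=
      le_trans markov hinteq
    rw [hXr]
    have hb' : (0:ℝ) < b * ε' := mul_pos hb hε'
    have key : (P {ω | T ≤ ‖G r ω - μ r‖ ^ 2}).toReal ≤ ε' / 4 := by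
      rw [← le_div_iff₀' hT] at hTP
      refine le_trans hTP (le_of_eq ?_)
      rw [hT_def]
      field_simp
    linarith
  -- Chernoff bound on B = ∑ X r
  set t : ℝ := Real.log 2 with ht_def
  set B : Ω → ℝ := ∑ r ∈ Finset.univ, (fun i : H => X i.1) r with hB_def
  have hBmeas : Measurable B := by
    have : B = fun ω => ∑ i : H, X i.1 ω := by
      funext ω; rw [hB_def]; simp [Finset.sum_apply]
    rw [this]
    exact Finset.measurable_sum _ (fun (i : H) _ => hXmeas i.1 i.2)
  have ht_pos : 0 < t := Real.log_pos one_lt_two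
  have hchern : (P {ω | ε' * R ≤ B ω}).toReal ≤ Real.exp (-(ε' ^ 2 * (1 - ε) * R) / 16) := by
    have hmgf_le : ∀ i : H, mgf (X i.1) P t ≤ Real.exp (ε' / 4) := by
      intro i
      have hexp : (fun ω => Real.exp (t * X i.1 ω)) = fun ω => 1 + X i.1 ω := by
        funext ω
        rcases hX01 i.1 ω with h | h
        · simp [h]
        · simp only [h, mul_one, ht_def, Real.exp_log two_pos]
          norm_num
      have : mgf (X i.1) P t = 1 + ∫ ω, X i.1 ω ∂P := by
        rw [mgf, hexp, integral_add (integrable_const 1) (hXint i.1 i.2), integral_const]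
        simp
      rw [this]
      have := hEX i.1 i.2
      have := Real.add_one_le_exp (ε' / 4)
      linarith
    have hBint : Integrable (fun ω => Real.exp (t * B ω)) P := by
      rw [hB_def]
      exact hindepX.integrable_exp_mul_sum (fun i => hXmeas i.1 i.2)
        (fun i _ => hXexpint t i.1 i.2)
    have hup := measure_ge_le_exp_mul_mgf (X := B) (μ := P) (t := t) (ε' * R) ht_pos.le hBint
    have hmgfB : mgf B P t = ∏ i : H, mgf (X i.1) P t := by
      rw [hB_def]
      exact hindepX.mgf_sum (fun i => hXmeas i.1 i.2) Finset.univ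
    have hprod : ∏ i : H, mgf (X i.1) P t ≤ Real.exp ((H.card : ℝ) * (ε' / 4)) := by
      calc ∏ i : H, mgf (X i.1) P t ≤ ∏ _i : H, Real.exp (ε' / 4) :=
            Finset.prod_le_prod (fun i _ => mgf_nonneg) (fun i _ => hmgf_le i)
        _ = Real.exp (ε' / 4) ^ (Fintype.card H) := by rw [Finset.prod_const, Finset.card_univ]
        _ = Real.exp ((H.card : ℝ) * (ε' / 4)) := by
            rw [← Real.exp_nat_mul, Fintype.card_coe]
    have hHR : (H.card : ℝ) ≤ R := by
      have := Finset.card_le_univ H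
      have h2 : H.card ≤ R := by simpa using this
      exact_mod_cast h2
    have hfinal : Real.exp (-t * (ε' * R)) * Real.exp ((H.card : ℝ) * (ε' / 4)) ≤
        Real.exp (-(ε' ^ 2 * (1 - ε) * R) / 16) := by
      rw [← Real.exp_add, Real.exp_le_exp]
      have hlog := Real.log_two_gt_d9
      have h1 : (H.card : ℝ) * (ε' / 4) ≤ R * (ε' / 4) := by
        apply mul_le_mul_of_nonneg_right hHR (by positivity)
      have h2 : ε' * (1 - ε) ≤ 1 := by nlinarith
      have hu : (0:ℝ) ≤ ε' * R := by positivity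
      have key : (ε' * R) * (ε' * (1 - ε)) ≤ (ε' * R) * 1 :=
        mul_le_mul_of_nonneg_left h2 hu
      have h3 : 0.6931471803 * (ε' * R) ≤ t * (ε' * R) :=
        mul_le_mul_of_nonneg_right hlog.le hu
      have hrw : ε' ^ 2 * (1 - ε) * (R:ℝ) = (ε' * R) * (ε' * (1 - ε)) := by ring
      rw [hrw]
      linarith
    calc (P {ω | ε' * R ≤ B ω}).toReal ≤ Real.exp (-t * (ε' * R)) * mgf B P t := hup
      _ ≤ Real.exp (-t * (ε' * R)) * Real.exp ((H.card : ℝ) * (ε' / 4)) := by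
          rw [hmgfB]
          exact mul_le_mul_of_nonneg_left hprod (Real.exp_nonneg _)
      _ ≤ _ := hfinal
  -- from the Chernoff bound to the final set inclusion
  set Bad : Set Ω := {ω | ε' * R ≤ B ω} with hBad_def
  have hBadMeas : MeasurableSet Bad := measurableSet_le measurable_const hBmeas
  set A : Set Ω := {ω | ∀ r ∈ H, G r ω = g r ω} with hA_def
  have hA_ae : ∀ᵐ ω ∂P, ω ∈ A :=
    (MeasureTheory.ae_ball_iff H.countable_toSet).2 fun r _ => hGae r
  set target : Set Ω := {ω | ∃ S : Finset (Fin R), S ⊆ H ∧ (1 - (ε + ε')) * R ≤ S.card ∧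
        ∀ v : EuclideanSpace ℝ (Fin d), ‖v‖ = 1 →
          (S.card : ℝ)⁻¹ * ∑ i ∈ S, ⟪g i ω - (S.card : ℝ)⁻¹ • ∑ j ∈ S, g j ω, v⟫ ^ 2 ≤
            24 * σ ^ 2 / (b * ε') * (1 + d / ((1 - (ε + ε')) * R)) + 16 * κ ^ 2} with htarget_def
  have hsub : Badᶜ ∩ A ⊆ target := by
    rintro ω ⟨hωgood, hωA⟩
    have hBω : B ω < ε' * R := not_le.1 hωgood
    set S : Finset (Fin R) := H.filter (fun r => ‖g r ω - μ r‖ ^ 2 ≤ T) with hS_def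
    have hSsub : S ⊆ H := Finset.filter_subset _ _
    -- value of B ω
    have hBval : B ω = ((H.filter (fun r => ¬ (‖g r ω - μ r‖ ^ 2 ≤ T))).card : ℝ) := by
      rw [hB_def]
      rw [Finset.sum_apply]
      rw [show ∑ i : H, X i.1 ω = ∑ r ∈ H, X r ω from Finset.sum_coe_sort H (fun r => X r ω)]
      rw [Finset.sum_congr rfl (fun r hr => by
        simp only [hX_def, hφ_def, Function.comp_apply, hωA r hr, not_le] :
        ∀ r ∈ H, X r ω = if ¬ (‖g r ω - μ r‖ ^ 2 ≤ T) then (1:ℝ) else 0)]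
      rw [Finset.sum_boole]
    have hcards : S.card + (H.filter (fun r => ¬ (‖g r ω - μ r‖ ^ 2 ≤ T))).card = H.card :=
      Finset.card_filter_add_card_filter_not _
    have hScard : (1 - (ε + ε')) * R ≤ (S.card : ℝ) := by
      have h1 : ((H.filter (fun r => ¬ (‖g r ω - μ r‖ ^ 2 ≤ T))).card : ℝ) < ε' * R := by
        rw [← hBval]; exact hBω
      have h2 : (S.card : ℝ) + ((H.filter (fun r => ¬ (‖g r ω - μ r‖ ^ 2 ≤ T))).card : ℝ)
          = (H.card : ℝ) := by exact_mod_cast congrArg (Nat.cast (R := ℝ)) hcards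
      linarith
    have hSpos : (0:ℝ) < (S.card : ℝ) := lt_of_lt_of_le (by positivity) hScard
    have hSne : S.Nonempty := Finset.card_pos.1 (by exact_mod_cast hSpos)
    refine ⟨S, hSsub, hScard, ?_⟩
    intro v hv
    set m : EuclideanSpace ℝ (Fin d) := (S.card : ℝ)⁻¹ • ∑ j ∈ S, g j ω with hm_def
    set c : EuclideanSpace ℝ (Fin d) := (R : ℝ)⁻¹ • ∑ j, μ j with hc_def
    have h1 : ∀ i ∈ S, ⟪g i ω - m, v⟫ ^ 2 ≤ ‖g i ω - m‖ ^ 2 := by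
      intro i _
      calc ⟪g i ω - m, v⟫ ^ 2 = |⟪g i ω - m, v⟫| ^ 2 := (sq_abs _).symm
        _ ≤ ‖g i ω - m‖ ^ 2 := by
            refine pow_le_pow_left₀ (abs_nonneg _) ?_ 2
            calc |⟪g i ω - m, v⟫| ≤ ‖g i ω - m‖ * ‖v‖ := abs_real_inner_le_norm _ _
              _ = ‖g i ω - m‖ := by rw [hv, mul_one]
    have h2 : ∑ i ∈ S, ‖g i ω - m‖ ^ 2 ≤ ∑ i ∈ S, ‖g i ω - c‖ ^ 2 :=
      my_sum_sq_mean_le S hSne (fun i => g i ω) c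
    have h3 : ∀ i ∈ S, ‖g i ω - c‖ ^ 2 ≤ 2 * T + 2 * κ ^ 2 := by
      intro i hi
      have e1 : ‖g i ω - μ i‖ ^ 2 ≤ T := (Finset.mem_filter.1 hi).2
      have e2 : ‖μ i - c‖ ≤ κ := hdissim i
      have e3 : ‖g i ω - c‖ ≤ ‖g i ω - μ i‖ + ‖μ i - c‖ := by
        have : g i ω - c = (g i ω - μ i) + (μ i - c) := by abel
        rw [this]; exact norm_add_le _ _
      nlinarith [norm_nonneg (g i ω - μ i), norm_nonneg (μ i - c), norm_nonneg (g i ω - c),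
        sq_nonneg (‖g i ω - μ i‖ - ‖μ i - c‖)]
    have h4 : ∑ i ∈ S, ⟪g i ω - m, v⟫ ^ 2 ≤ (S.card : ℝ) * (2 * T + 2 * κ ^ 2) := by
      calc ∑ i ∈ S, ⟪g i ω - m, v⟫ ^ 2 ≤ ∑ i ∈ S, ‖g i ω - m‖ ^ 2 := Finset.sum_le_sum h1
        _ ≤ ∑ i ∈ S, ‖g i ω - c‖ ^ 2 := h2
        _ ≤ ∑ _i ∈ S, (2 * T + 2 * κ ^ 2) := Finset.sum_le_sum h3
        _ = (S.card : ℝ) * (2 * T + 2 * κ ^ 2) := by rw [Finset.sum_const, nsmul_eq_mul]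
    have h5 : (S.card : ℝ)⁻¹ * ∑ i ∈ S, ⟪g i ω - m, v⟫ ^ 2 ≤ 2 * T + 2 * κ ^ 2 := by
      rw [inv_mul_le_iff₀ hSpos]
      linarith [h4]
    refine le_trans h5 ?_
    have hdd : (0:ℝ) ≤ (d : ℝ) / ((1 - (ε + ε')) * R) := by positivity
    have hq : (0:ℝ) ≤ σ ^ 2 / (b * ε') := by positivity
    have h24 : (0:ℝ) ≤ 24 * σ ^ 2 / (b * ε') := by positivity
    have hT2 : 2 * T = 8 * σ ^ 2 / (b * ε') := by rw [hT_def]; ring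
    have h8 : 8 * σ ^ 2 / (b * ε') ≤ 24 * σ ^ 2 / (b * ε') := by
      have hbe : (0:ℝ) < b * ε' := mul_pos hb hε'
      have h82 : (8:ℝ) * σ ^ 2 ≤ 24 * σ ^ 2 := by nlinarith [sq_nonneg σ]
      rw [div_le_div_iff₀ hbe hbe]
      nlinarith [sq_nonneg σ, hbe]

    nlinarith [mul_nonneg h24 hdd]
  calc ENNReal.ofReal (1 - Real.exp (-(ε' ^ 2 * (1 - ε) * R) / 16))
      = 1 - ENNReal.ofReal (Real.exp (-(ε' ^ 2 * (1 - ε) * R) / 16)) := by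
        rw [ENNReal.ofReal_sub _ (Real.exp_nonneg _), ENNReal.ofReal_one]
    _ ≤ 1 - P Bad := by
        refine tsub_le_tsub_left ?_ 1
        rw [← ENNReal.ofReal_toReal (measure_ne_top P Bad)]
        exact ENNReal.ofReal_le_ofReal hchern
    _ = P Badᶜ := (prob_compl_eq_one_sub hBadMeas).symm
    _ = P (Badᶜ ∩ A) := by
        refine (measure_congr ?_).symm
        refine Filter.eventuallyEq_set.2 ?_
        filter_upwards [hA_ae] with ω hω
        simp [hω]
    _ ≤ P target := measure_mono hsub
end

section
/- Let d be a positive integer and let F : ℝ^d → ℝ be differentiable, L-smooth, and μ-strongly convex with 0 < μ ≤ L, and let x* ∈ ℝ^d be a minimizer of F (so ∇F(x*) = 0). Let e ≥ 0 and let (x^t)_{t≥0}, (g^t)_{t≥0} be sequences in ℝ^d satisfying x^{t+1} = x^t − (μ/L²)·g^t and ‖g^t − ∇F(x^t)‖² ≤ e² for every t ≥ 0. Then for every T ≥ 0, ‖x^T − x*‖² ≤ (1 − μ²/(2L²))^T · ‖x^0 − x*‖² + (6L²/μ⁴)·e². -/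
set_option maxHeartbeats 1000000

open scoped RealInnerProductSpace BigOperators

lemma key_real (L μ e A W s : ℝ) (hμ : 0 < μ) (hμL : μ ≤ L) (he : 0 ≤ e)
    (hA : 0 ≤ A) (hW : 0 ≤ W) (hs : 0 ≤ s)
    (h1 : A ^ 2 ≤ (1 - μ ^ 2 / L ^ 2) * s) (hWe : W ≤ e) :
    (A + (μ / L ^ 2) * W) ^ 2 ≤ (1 - μ ^ 2 / (2 * L ^ 2)) * s + 3 / L ^ 2 * e ^ 2 := by
  have hL : 0 < L := lt_of_lt_of_le hμ hμL
  have hL2 : (0:ℝ) < L ^ 2 := by positivity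
  have hW2 : W ^ 2 ≤ e ^ 2 := by nlinarith
  have h1' : L ^ 2 * A ^ 2 ≤ (L ^ 2 - μ ^ 2) * s := by
    have := mul_le_mul_of_nonneg_left h1 hL2.le
    calc L ^ 2 * A ^ 2 ≤ L ^ 2 * ((1 - μ ^ 2 / L ^ 2) * s) := this
      _ = (L ^ 2 - μ ^ 2) * s := by field_simp
  have hpoly : 2 * (L ^ 2 * A + μ * W) ^ 2 ≤ (2 * L ^ 4 - μ ^ 2 * L ^ 2) * s + 6 * L ^ 2 * e ^ 2 := by
    nlinarith [mul_le_mul_of_nonneg_left h1' (by positivity : (0:ℝ) ≤ 2 * L ^ 2),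
      mul_le_mul_of_nonneg_left h1' (by positivity : (0:ℝ) ≤ μ ^ 2),
      mul_nonneg hL2.le (sq_nonneg (μ * A - 2 * W)),
      mul_le_mul_of_nonneg_left hW2 (by positivity : (0:ℝ) ≤ 6 * L ^ 2),
      mul_nonneg hs (by positivity : (0:ℝ) ≤ μ ^ 4),
      mul_nonneg (by nlinarith : (0:ℝ) ≤ L ^ 2 - μ ^ 2) (sq_nonneg W)]
  have key : (A + (μ / L ^ 2) * W) ^ 2 = (L ^ 2 * A + μ * W) ^ 2 / L ^ 4 := by
    field_simp
  rw [key, div_le_iff₀ (by positivity)]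
  have hgoal : ((1 - μ ^ 2 / (2 * L ^ 2)) * s + 3 / L ^ 2 * e ^ 2) * L ^ 4
      = ((2 * L ^ 4 - μ ^ 2 * L ^ 2) * s + 6 * L ^ 2 * e ^ 2) / 2 := by
    field_simp; ring
  rw [hgoal]; linarith

/-- **Strongly-convex convergence of Byzantine-resilient SGD**:
with learning rate `μ / L²` and per-iteration gradient-estimation error at most `e`,
the iterates converge exponentially fast to a ball of squared radius `(6L²/μ⁴)e²`
around the minimizer. -/
theorem stmt_1
    (d : ℕ) (hd : 0 < d)
    (F : EuclideanSpace ℝ (Fin d) → ℝ) (L μ : ℝ)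
    (hμ : 0 < μ) (hμL : μ ≤ L)
    (hdiff : Differentiable ℝ F)
    (hsmooth : ∀ x y, ‖gradient F x - gradient F y‖ ≤ L * ‖x - y‖)
    (hconv : ∀ x y, F x + ⟪gradient F x, y - x⟫ + μ / 2 * ‖x - y‖ ^ 2 ≤ F y)
    (xstar : EuclideanSpace ℝ (Fin d))
    (hmin : ∀ x, F xstar ≤ F x) (hgrad0 : gradient F xstar = 0)
    (e : ℝ) (he : 0 ≤ e)
    (x g : ℕ → EuclideanSpace ℝ (Fin d))
    (hstep : ∀ t, x (t + 1) = x t - (μ / L ^ 2) • g t)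
    (herr : ∀ t, ‖g t - gradient F (x t)‖ ^ 2 ≤ e ^ 2) :
    ∀ T : ℕ, ‖x T - xstar‖ ^ 2 ≤
      (1 - μ ^ 2 / (2 * L ^ 2)) ^ T * ‖x 0 - xstar‖ ^ 2 + 6 * L ^ 2 / μ ^ 4 * e ^ 2 := by
  have hL : 0 < L := lt_of_lt_of_le hμ hμL
  have hL2 : (0:ℝ) < L ^ 2 := by positivity
  have hη : (0:ℝ) ≤ μ / L ^ 2 := by positivity
  -- one-step bound
  have keystep : ∀ t, ‖x (t + 1) - xstar‖ ^ 2 ≤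
      (1 - μ ^ 2 / (2 * L ^ 2)) * ‖x t - xstar‖ ^ 2 + 3 / L ^ 2 * e ^ 2 := by
    intro t
    set v := x t - xstar with hv
    set G := gradient F (x t) with hG
    set w := g t - G with hw
    -- strong convexity: coercivity
    have hsc1 := hconv (x t) xstar
    have hsc2 := hconv xstar (x t)
    rw [hgrad0, inner_zero_left] at hsc2
    have hinner : μ * ‖v‖ ^ 2 ≤ ⟪G, v⟫ := by
      have e1 : ⟪G, xstar - x t⟫ = -⟪G, v⟫ := by
        rw [hv, show xstar - x t = -(x t - xstar) by abel, inner_neg_right]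
      rw [e1] at hsc1
      have e2 : ‖xstar - x t‖ = ‖v‖ := by rw [hv, norm_sub_rev]
      rw [e2] at hsc2
      have e3 : ‖x t - xstar‖ = ‖v‖ := rfl
      rw [e3] at hsc1
      linarith
    -- smoothness
    have hGnorm : ‖G‖ ≤ L * ‖v‖ := by
      have := hsmooth (x t) xstar
      rwa [hgrad0, sub_zero] at this
    -- contraction of the noiseless step
    have hA2 : ‖v - (μ / L ^ 2) • G‖ ^ 2 ≤ (1 - μ ^ 2 / L ^ 2) * ‖v‖ ^ 2 := by
      have hexp : ‖v - (μ / L ^ 2) • G‖ ^ 2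
          = ‖v‖ ^ 2 - 2 * ((μ / L ^ 2) * ⟪G, v⟫) + (μ / L ^ 2) ^ 2 * ‖G‖ ^ 2 := by
        rw [norm_sub_sq_real, real_inner_smul_right, norm_smul, Real.norm_eq_abs,
          abs_of_nonneg hη, real_inner_comm]
        ring
      have hG2 : ‖G‖ ^ 2 ≤ L ^ 2 * ‖v‖ ^ 2 := by nlinarith [norm_nonneg G, norm_nonneg v]
      have h2 : 2 * ((μ / L ^ 2) * (μ * ‖v‖ ^ 2)) ≤ 2 * ((μ / L ^ 2) * ⟪G, v⟫) := by
        have := mul_le_mul_of_nonneg_left hinner hη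
        linarith
      have h3 : (μ / L ^ 2) ^ 2 * ‖G‖ ^ 2 ≤ (μ / L ^ 2) ^ 2 * (L ^ 2 * ‖v‖ ^ 2) :=
        mul_le_mul_of_nonneg_left hG2 (by positivity)
      rw [hexp]
      have heq : ‖v‖ ^ 2 - 2 * ((μ / L ^ 2) * (μ * ‖v‖ ^ 2)) + (μ / L ^ 2) ^ 2 * (L ^ 2 * ‖v‖ ^ 2)
          = (1 - μ ^ 2 / L ^ 2) * ‖v‖ ^ 2 := by
        field_simp; ring
      linarith
    -- rewrite the step
    have hxt : x (t + 1) - xstar = (v - (μ / L ^ 2) • G) - (μ / L ^ 2) • w := by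
      rw [hstep t, hw, hv, smul_sub]
      abel
    have htri : ‖x (t + 1) - xstar‖ ≤ ‖v - (μ / L ^ 2) • G‖ + (μ / L ^ 2) * ‖w‖ := by
      rw [hxt]
      refine (norm_sub_le _ _).trans ?_
      rw [norm_smul, Real.norm_eq_abs, abs_of_nonneg hη]
    have hWe : ‖w‖ ≤ e := by
      have := herr t
      rw [← hw] at this
      nlinarith [norm_nonneg w]
    have hAnn : (0:ℝ) ≤ ‖v - (μ / L ^ 2) • G‖ := norm_nonneg _
    have := key_real L μ e ‖v - (μ / L ^ 2) • G‖ ‖w‖ (‖v‖ ^ 2) hμ hμL he hAnn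
      (norm_nonneg _) (by positivity) hA2 hWe
    calc ‖x (t + 1) - xstar‖ ^ 2 ≤ (‖v - (μ / L ^ 2) • G‖ + (μ / L ^ 2) * ‖w‖) ^ 2 :=
          pow_le_pow_left₀ (norm_nonneg _) htri 2
      _ ≤ (1 - μ ^ 2 / (2 * L ^ 2)) * ‖v‖ ^ 2 + 3 / L ^ 2 * e ^ 2 := this
  -- induction
  have hρ0 : (0:ℝ) ≤ 1 - μ ^ 2 / (2 * L ^ 2) := by
    rw [sub_nonneg, div_le_one (by positivity)]
    nlinarith
  have hC0 : (0:ℝ) ≤ 6 * L ^ 2 / μ ^ 4 * e ^ 2 := by positivity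
  have hμ2L2 : μ ^ 2 ≤ L ^ 2 := by nlinarith
  have hBC : 3 / L ^ 2 * e ^ 2 ≤ μ ^ 2 / (2 * L ^ 2) * (6 * L ^ 2 / μ ^ 4 * e ^ 2) := by
    have h1 : μ ^ 2 / (2 * L ^ 2) * (6 * L ^ 2 / μ ^ 4 * e ^ 2) = 3 / μ ^ 2 * e ^ 2 := by
      field_simp; ring
    rw [h1]
    have h2 : 3 / L ^ 2 ≤ 3 / μ ^ 2 :=
      div_le_div_of_nonneg_left (by norm_num) (by positivity) hμ2L2
    exact mul_le_mul_of_nonneg_right h2 (sq_nonneg e)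
  intro T
  induction T with
  | zero => simp only [pow_zero, one_mul]; linarith
  | succ T ih =>
    calc ‖x (T + 1) - xstar‖ ^ 2
        ≤ (1 - μ ^ 2 / (2 * L ^ 2)) * ‖x T - xstar‖ ^ 2 + 3 / L ^ 2 * e ^ 2 := keystep T
      _ ≤ (1 - μ ^ 2 / (2 * L ^ 2)) *
            ((1 - μ ^ 2 / (2 * L ^ 2)) ^ T * ‖x 0 - xstar‖ ^ 2 + 6 * L ^ 2 / μ ^ 4 * e ^ 2)
            + 3 / L ^ 2 * e ^ 2 := by
          have := mul_le_mul_of_nonneg_left ih hρ0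
          linarith
      _ ≤ (1 - μ ^ 2 / (2 * L ^ 2)) ^ (T + 1) * ‖x 0 - xstar‖ ^ 2
            + 6 * L ^ 2 / μ ^ 4 * e ^ 2 := by
          have hexp : (1 - μ ^ 2 / (2 * L ^ 2)) *
              ((1 - μ ^ 2 / (2 * L ^ 2)) ^ T * ‖x 0 - xstar‖ ^ 2 + 6 * L ^ 2 / μ ^ 4 * e ^ 2)
              + 3 / L ^ 2 * e ^ 2
              = (1 - μ ^ 2 / (2 * L ^ 2)) ^ (T + 1) * ‖x 0 - xstar‖ ^ 2
                + 6 * L ^ 2 / μ ^ 4 * e ^ 2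
                + (3 / L ^ 2 * e ^ 2 - μ ^ 2 / (2 * L ^ 2) * (6 * L ^ 2 / μ ^ 4 * e ^ 2)) := by
            ring
          rw [hexp]
          linarith
end

section
/- Let d be a positive integer, let F : ℝ^d → ℝ be differentiable and L-smooth with L > 0, and let x* ∈ ℝ^d be a global minimizer of F (so F(x*) ≤ F(x) for all x and ∇F(x*) = 0). Let e ≥ 0 and let (x^t)_{t≥0}, (g^t)_{t≥0} be sequences in ℝ^d satisfying x^{t+1} = x^t − (1/(4L))·g^t and ‖g^t − ∇F(x^t)‖² ≤ e² for every t ≥ 0. Then for every T ≥ 0, (1/(T+1)) ∑_{t=0}^{T} ‖∇F(x^t)‖² ≤ (8L²/(T+1))·‖x^0 − x*‖² + 3e². -/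
open scoped RealInnerProductSpace BigOperators

lemma descent_aux {d : ℕ}
    (F : EuclideanSpace ℝ (Fin d) → ℝ) (L : ℝ) (hL : 0 < L)
    (hdiff : Differentiable ℝ F)
    (hsmooth : ∀ x y, ‖gradient F x - gradient F y‖ ≤ L * ‖x - y‖)
    (a b : EuclideanSpace ℝ (Fin d)) :
    F b ≤ F a + ⟪gradient F a, b - a⟫ + L / 2 * ‖b - a‖ ^ 2 := by
  set v := b - a with hv
  have hγ : ∀ t : ℝ, HasDerivAt (fun t : ℝ => a + t • v) v t := by
    intro t
    simpa using ((hasDerivAt_id t).smul_const v).const_add a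
  have hφ : ∀ t : ℝ, HasDerivAt (fun t : ℝ => F (a + t • v))
      ⟪gradient F (a + t • v), v⟫ t := by
    intro t
    have hF := (hdiff (a + t • v)).hasGradientAt
    have hF' := hasGradientAt_iff_hasFDerivAt.1 hF
    have := hF'.comp_hasDerivAt t (hγ t)
    simpa [InnerProductSpace.toDual_apply_apply, Function.comp_def] using this
  set ψ : ℝ → ℝ := fun t => F (a + t • v) - t * ⟪gradient F a, v⟫ - L * t ^ 2 / 2 * ‖v‖ ^ 2
    with hψ
  have hψ' : ∀ t : ℝ, HasDerivAt ψ
      (⟪gradient F (a + t • v), v⟫ - ⟪gradient F a, v⟫ - L * t * ‖v‖ ^ 2) t := by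
    intro t
    have h1 : HasDerivAt (fun t : ℝ => t * ⟪gradient F a, v⟫) ⟪gradient F a, v⟫ t := by
      simpa using (hasDerivAt_id t).mul_const _
    have h2 : HasDerivAt (fun t : ℝ => L * t ^ 2 / 2 * ‖v‖ ^ 2) (L * t * ‖v‖ ^ 2) t := by
      have : HasDerivAt (fun t : ℝ => t ^ 2) (2 * t) t := by
        simpa using hasDerivAt_pow 2 t
      have := ((this.const_mul L).div_const 2).mul_const (‖v‖ ^ 2)
      exact this.congr_deriv (by ring)
    have := ((hφ t).sub h1).sub h2
    exact this
  have hanti : AntitoneOn ψ (Set.Icc (0:ℝ) 1) := by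
    apply antitoneOn_of_deriv_nonpos (convex_Icc 0 1)
    · exact fun t _ => ((hψ' t).continuousAt).continuousWithinAt
    · exact fun t _ => ((hψ' t).differentiableAt).differentiableWithinAt
    · intro t ht
      rw [interior_Icc] at ht
      rw [(hψ' t).deriv]
      have hcs : ⟪gradient F (a + t • v) - gradient F a, v⟫ ≤
          ‖gradient F (a + t • v) - gradient F a‖ * ‖v‖ := real_inner_le_norm _ _
      have hlip : ‖gradient F (a + t • v) - gradient F a‖ ≤ L * (t * ‖v‖) := by
        have := hsmooth (a + t • v) a
        simpa [norm_smul, abs_of_nonneg ht.1.le, mul_assoc] using this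
      have : ⟪gradient F (a + t • v), v⟫ - ⟪gradient F a, v⟫ ≤ L * t * ‖v‖ ^ 2 := by
        rw [← inner_sub_left]
        calc _ ≤ ‖gradient F (a + t • v) - gradient F a‖ * ‖v‖ := hcs
        _ ≤ L * (t * ‖v‖) * ‖v‖ := by
            exact mul_le_mul_of_nonneg_right hlip (norm_nonneg _)
        _ = L * t * ‖v‖ ^ 2 := by ring
      linarith
  have key := hanti (Set.left_mem_Icc.2 one_pos.le) (Set.right_mem_Icc.2 one_pos.le) one_pos.le
  have h0 : ψ 0 = F a := by simp [hψ]
  have h1 : ψ 1 = F b - ⟪gradient F a, v⟫ - L / 2 * ‖v‖ ^ 2 := by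
    have hab : a + (1:ℝ) • v = b := by rw [hv]; simp
    simp only [hψ, hab, one_mul, one_pow]
    ring
  rw [h0, h1] at key
  linarith

/-- **Non-convex convergence of Byzantine-resilient SGD**:
with learning rate `1/(4L)` and per-iteration gradient-estimation error at most `e`,
the average squared gradient norm decays at rate `1/T` up to the floor `3e²`. -/
theorem stmt_2
    (d : ℕ) (hd : 0 < d)
    (F : EuclideanSpace ℝ (Fin d) → ℝ) (L : ℝ) (hL : 0 < L)
    (hdiff : Differentiable ℝ F)
    (hsmooth : ∀ x y, ‖gradient F x - gradient F y‖ ≤ L * ‖x - y‖)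
    (xstar : EuclideanSpace ℝ (Fin d))
    (hmin : ∀ x, F xstar ≤ F x) (hgrad0 : gradient F xstar = 0)
    (e : ℝ) (he : 0 ≤ e)
    (x g : ℕ → EuclideanSpace ℝ (Fin d))
    (hstep : ∀ t, x (t + 1) = x t - (1 / (4 * L)) • g t)
    (herr : ∀ t, ‖g t - gradient F (x t)‖ ^ 2 ≤ e ^ 2) :
    ∀ T : ℕ, (1 / (T + 1 : ℝ)) * ∑ t ∈ Finset.range (T + 1), ‖gradient F (x t)‖ ^ 2 ≤
      8 * L ^ 2 / (T + 1 : ℝ) * ‖x 0 - xstar‖ ^ 2 + 3 * e ^ 2 := by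
  have step : ∀ t, ‖gradient F (x t)‖ ^ 2 ≤ 8 * L * (F (x t) - F (x (t + 1))) + e ^ 2 := by
    intro t
    set h := gradient F (x t) with hh
    set δ := g t - h with hδ
    set A := ‖h‖ ^ 2 with hA
    set B := ‖δ‖ ^ 2 with hB
    set C := ⟪h, δ⟫ with hC
    have hgdecomp : g t = h + δ := by rw [hδ]; abel
    have hG : ‖g t‖ ^ 2 = A + 2 * C + B := by
      rw [hgdecomp, hA, hB, hC, norm_add_sq_real]
    have hin : ⟪h, g t⟫ = A + C := by
      rw [hgdecomp, inner_add_right, hA, hC, real_inner_self_eq_norm_sq]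
    have hba : x (t + 1) - x t = -((1 / (4 * L)) • g t) := by rw [hstep t]; abel
    have hd2 := descent_aux F L hL hdiff hsmooth (x t) (x (t + 1))
    rw [hba] at hd2
    rw [inner_neg_right, real_inner_smul_right, norm_neg, norm_smul, hin] at hd2
    have hnn : ‖(1 / (4 * L) : ℝ)‖ = 1 / (4 * L) := by
      rw [Real.norm_eq_abs, abs_of_pos]; positivity
    rw [hnn, mul_pow, hG] at hd2
    -- hd2 : F (x (t+1)) ≤ F (x t) + -(1/(4L) * (A + C)) + L/2 * ((1/(4L))^2 * (A + 2C + B))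
    have hGnn : (0:ℝ) ≤ A + 2 * C + B := by rw [← hG]; positivity
    have hBe : B ≤ e ^ 2 := herr t
    have hc8 : 8 * L * (1 / (4 * L) * (A + C) - L / 2 * ((1 / (4 * L)) ^ 2 * (A + 2 * C + B)))
        = (7 * A + 6 * C - B) / 4 := by field_simp; ring
    have hmul : 8 * L * (1 / (4 * L) * (A + C) - L / 2 * ((1 / (4 * L)) ^ 2 * (A + 2 * C + B)))
        ≤ 8 * L * (F (x t) - F (x (t + 1))) := by
      apply mul_le_mul_of_nonneg_left _ (by positivity)
      linarith
    rw [hc8] at hmul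
    linarith
  intro T
  have hT : (0:ℝ) < (T:ℝ) + 1 := by positivity
  have hsum : ∑ t ∈ Finset.range (T + 1), ‖gradient F (x t)‖ ^ 2
      ≤ 8 * L * (F (x 0) - F (x (T + 1))) + (T + 1 : ℝ) * e ^ 2 := by
    calc ∑ t ∈ Finset.range (T + 1), ‖gradient F (x t)‖ ^ 2
        ≤ ∑ t ∈ Finset.range (T + 1), (8 * L * (F (x t) - F (x (t + 1))) + e ^ 2) :=
          Finset.sum_le_sum fun t _ => step t
      _ = 8 * L * (F (x 0) - F (x (T + 1))) + (T + 1 : ℝ) * e ^ 2 := by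
          rw [Finset.sum_add_distrib, ← Finset.mul_sum, Finset.sum_range_sub']
          simp [mul_comm]
  have hinit : F (x 0) - F (x (T + 1)) ≤ L / 2 * ‖x 0 - xstar‖ ^ 2 := by
    have hd0 := descent_aux F L hL hdiff hsmooth xstar (x 0)
    rw [hgrad0] at hd0
    simp only [inner_zero_left, add_zero] at hd0
    have := hmin (x (T + 1))
    linarith
  have hN : (0:ℝ) ≤ ‖x 0 - xstar‖ ^ 2 := by positivity
  have hS : ∑ t ∈ Finset.range (T + 1), ‖gradient F (x t)‖ ^ 2
      ≤ 4 * L ^ 2 * ‖x 0 - xstar‖ ^ 2 + (T + 1 : ℝ) * e ^ 2 := by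
    have h8 : 8 * L * (F (x 0) - F (x (T + 1))) ≤ 4 * L ^ 2 * ‖x 0 - xstar‖ ^ 2 := by
      have := mul_le_mul_of_nonneg_left hinit (by positivity : (0:ℝ) ≤ 8 * L)
      calc 8 * L * (F (x 0) - F (x (T + 1))) ≤ 8 * L * (L / 2 * ‖x 0 - xstar‖ ^ 2) := this
        _ = 4 * L ^ 2 * ‖x 0 - xstar‖ ^ 2 := by ring
    linarith
  have key : (1 / ((T:ℝ) + 1)) * ∑ t ∈ Finset.range (T + 1), ‖gradient F (x t)‖ ^ 2
      ≤ (1 / ((T:ℝ) + 1)) * (4 * L ^ 2 * ‖x 0 - xstar‖ ^ 2 + (T + 1 : ℝ) * e ^ 2) :=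
    mul_le_mul_of_nonneg_left hS (by positivity)
  have heq : (1 / ((T:ℝ) + 1)) * (4 * L ^ 2 * ‖x 0 - xstar‖ ^ 2 + (T + 1 : ℝ) * e ^ 2)
      = 4 * L ^ 2 / ((T:ℝ) + 1) * ‖x 0 - xstar‖ ^ 2 + e ^ 2 := by
    field_simp
  rw [heq] at key
  have hle : 4 * L ^ 2 / ((T:ℝ) + 1) * ‖x 0 - xstar‖ ^ 2
      ≤ 8 * L ^ 2 / ((T:ℝ) + 1) * ‖x 0 - xstar‖ ^ 2 := by
    gcongr
    nlinarith [sq_nonneg L]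
  nlinarith [sq_nonneg e]
end

section
/- Let (Ω, P) be a probability space, let d ≥ 1, let S be a finite nonempty index set, and let σ, b, κ, Υ > 0. Let (g_r)_{r∈S} be independent, square-integrable random vectors in ℝ^d with means μ_r = E[g_r] satisfying E[‖g_r − μ_r‖²] ≤ σ²/b for every r ∈ S, and let μ̄ ∈ ℝ^d be a vector with ‖μ_r − μ̄‖ ≤ κ for every r ∈ S. Let ĝ be any random vector in ℝ^d such that ‖ĝ(ω) − (1/|S|)∑_{r∈S} g_r(ω)‖ ≤ Υ for every ω ∈ Ω. Then E[‖μ̄ − ĝ‖²] ≤ 3σ²/(b|S|) + 3κ² + 3Υ². -/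
open MeasureTheory ProbabilityTheory
open scoped RealInnerProductSpace BigOperators ENNReal

private lemma my_integrable_inner {Ω : Type*} [MeasurableSpace Ω] {P : Measure Ω}
    {E : Type*} [NormedAddCommGroup E] [InnerProductSpace ℝ E]
    {f g : Ω → E} (hf : MemLp f 2 P) (hg : MemLp g 2 P) :
    Integrable (fun ω => ⟪f ω, g ω⟫) P := by
  have h := MeasureTheory.L2.integrable_inner (𝕜 := ℝ) (hf.toLp f) (hg.toLp g)
  refine h.congr ?_
  filter_upwards [hf.coeFn_toLp, hg.coeFn_toLp] with ω h1 h2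
  rw [h1, h2]

/-- **Expected squared deviation of the robustly estimated gradient from the true
global gradient**: if the estimate `ĝ` is always within `Υ` of the sample mean of the
independent stochastic gradients `g_r` (each with mean `μ_r`, variance at most `σ²/b`,
and `‖μ_r − μ̄‖ ≤ κ`), then `E‖μ̄ − ĝ‖² ≤ 3σ²/(b|S|) + 3κ² + 3Υ²`. -/
theorem stmt_3
    (Ω : Type*) [MeasurableSpace Ω] (P : Measure Ω) [IsProbabilityMeasure P]
    (d : ℕ) (hd : 0 < d)
    (ι : Type*) [Fintype ι] [Nonempty ι]
    (σ b κ Υ : ℝ) (hσ : 0 < σ) (hb : 0 < b) (hκ : 0 < κ) (hΥ : 0 < Υ)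
    (g : ι → Ω → EuclideanSpace ℝ (Fin d))
    (hindep : iIndepFun g P)
    (hL2 : ∀ r, MemLp (g r) 2 P)
    (μ : ι → EuclideanSpace ℝ (Fin d))
    (hmean : ∀ r, μ r = ∫ ω, g r ω ∂P)
    (hvar : ∀ r, ∫ ω, ‖g r ω - μ r‖ ^ 2 ∂P ≤ σ ^ 2 / b)
    (μbar : EuclideanSpace ℝ (Fin d)) (hdis : ∀ r, ‖μ r - μbar‖ ≤ κ)
    (ghat : Ω → EuclideanSpace ℝ (Fin d)) (hmeas : AEStronglyMeasurable ghat P)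
    (hghat : ∀ ω, ‖ghat ω - (Fintype.card ι : ℝ)⁻¹ • ∑ r, g r ω‖ ≤ Υ) :
    ∫ ω, ‖μbar - ghat ω‖ ^ 2 ∂P ≤
      3 * σ ^ 2 / (b * Fintype.card ι) + 3 * κ ^ 2 + 3 * Υ ^ 2 := by
  classical
  set R : ℕ := Fintype.card ι with hR
  have hR0 : 0 < (R : ℝ) := by exact_mod_cast Fintype.card_pos
  set X : ι → Ω → EuclideanSpace ℝ (Fin d) := fun r ω => g r ω - μ r with hXdef
  have hXL2 : ∀ r, MemLp (X r) 2 P := fun r => (hL2 r).sub (memLp_const _)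
  have hgint : ∀ r, Integrable (g r) P := fun r => (hL2 r).integrable one_le_two
  have hXint : ∀ r, Integrable (X r) P := fun r => (hXL2 r).integrable one_le_two
  have hXmean : ∀ r, ∫ ω, X r ω ∂P = 0 := by
    intro r
    simp only [hXdef]
    rw [integral_sub (hgint r) (integrable_const _), integral_const]
    simp [← hmean r]
  -- cross terms vanish by independence
  have hproj : ∀ t (i : Fin d), MemLp (fun ω => X t ω i) 2 P := fun t i =>
    (EuclideanSpace.proj (𝕜 := ℝ) i).comp_memLp' (hXL2 t)
  have hcross : ∀ r s, r ≠ s → ∫ ω, ⟪X r ω, X s ω⟫ ∂P = 0 := by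
    intro r s hrs
    have hip : ∀ t (i : Fin d), Integrable (fun ω => X t ω i) P := fun t i =>
      (hproj t i).integrable one_le_two
    have hmean0 : ∀ t (i : Fin d), ∫ ω, X t ω i ∂P = 0 := by
      intro t i
      have h := (EuclideanSpace.proj (𝕜 := ℝ) i
        : EuclideanSpace ℝ (Fin d) →L[ℝ] ℝ).integral_comp_comm (hXint t)
      simpa [hXmean t] using h
    have hindrs : ∀ (i : Fin d),
        IndepFun (fun ω => X r ω i) (fun ω => X s ω i) P := by
      intro i
      have h1 : IndepFun (g r) (g s) P := hindep.indepFun hrs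
      have hm : ∀ t : ι, Measurable fun v : EuclideanSpace ℝ (Fin d) => v i - μ t i :=
        fun t => ((EuclideanSpace.proj (𝕜 := ℝ) i).measurable).sub measurable_const
      exact h1.comp (hm r) (hm s)
    have hmul : ∀ i : Fin d, ∫ ω, X r ω i * X s ω i ∂P = 0 := by
      intro i
      have h : ∫ ω, X r ω i * X s ω i ∂P
          = (∫ ω, X r ω i ∂P) * ∫ ω, X s ω i ∂P :=
        (hindrs i).integral_fun_mul_eq_mul_integral (hip r i).1 (hip s i).1
      rw [h, hmean0 r i, hmean0 s i]
      ring
    calc ∫ ω, ⟪X r ω, X s ω⟫ ∂P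
        = ∫ ω, ∑ i, X r ω i * X s ω i ∂P := by
          refine integral_congr_ae (Filter.Eventually.of_forall fun ω => ?_)
          simp [PiLp.inner_apply, RCLike.inner_apply, mul_comm]
      _ = ∑ i, ∫ ω, X r ω i * X s ω i ∂P := by
          refine integral_finset_sum _ fun i _ => ?_
          have h := my_integrable_inner (hproj r i) (hproj s i)
          simpa [RCLike.inner_apply, mul_comm] using h
      _ = 0 := by simp [hmul]
  -- second moment of the sum of centered variables
  have hsum2 : ∫ ω, ‖∑ r, X r ω‖ ^ 2 ∂P ≤ (R : ℝ) * (σ ^ 2 / b) := by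
    have hint : ∀ r s : ι, Integrable (fun ω => ⟪X r ω, X s ω⟫) P :=
      fun r s => my_integrable_inner (hXL2 r) (hXL2 s)
    have hexp : ∀ ω, ‖∑ r, X r ω‖ ^ 2 = ∑ r, ∑ s, ⟪X r ω, X s ω⟫ := by
      intro ω
      rw [← real_inner_self_eq_norm_sq, sum_inner]
      exact Finset.sum_congr rfl fun r _ => inner_sum _ _ _
    calc ∫ ω, ‖∑ r, X r ω‖ ^ 2 ∂P
        = ∫ ω, ∑ r, ∑ s, ⟪X r ω, X s ω⟫ ∂P := by simp_rw [hexp]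
      _ = ∑ r, ∑ s, ∫ ω, ⟪X r ω, X s ω⟫ ∂P := by
          rw [integral_finset_sum _ fun r _ =>
            integrable_finset_sum _ fun s _ => hint r s]
          exact Finset.sum_congr rfl fun r _ => integral_finset_sum _ fun s _ => hint r s
      _ = ∑ r, ∫ ω, ⟪X r ω, X r ω⟫ ∂P := by
          refine Finset.sum_congr rfl fun r _ => ?_
          exact Finset.sum_eq_single r (fun s _ hs => hcross r s (Ne.symm hs))
            (fun h => absurd (Finset.mem_univ r) h)
      _ ≤ ∑ _r : ι, σ ^ 2 / b := by
          refine Finset.sum_le_sum fun r _ => ?_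
          have h : ∫ ω, ⟪X r ω, X r ω⟫ ∂P = ∫ ω, ‖X r ω‖ ^ 2 ∂P := by
            simp_rw [real_inner_self_eq_norm_sq]
          rw [h]; exact hvar r
      _ = (R : ℝ) * (σ ^ 2 / b) := by
          simp [Finset.sum_const, Finset.card_univ, nsmul_eq_mul, hR]
  -- sample mean and mean of means
  set Sbar : Ω → EuclideanSpace ℝ (Fin d) := fun ω => (R : ℝ)⁻¹ • ∑ r, g r ω with hSbar
  set μs : EuclideanSpace ℝ (Fin d) := (R : ℝ)⁻¹ • ∑ r, μ r with hμs
  have hdiff : ∀ ω, Sbar ω - μs = (R : ℝ)⁻¹ • ∑ r, X r ω := by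
    intro ω
    rw [hSbar, hμs, ← smul_sub, ← Finset.sum_sub_distrib]
  have hB : ∫ ω, ‖Sbar ω - μs‖ ^ 2 ∂P ≤ σ ^ 2 / (b * R) := by
    calc ∫ ω, ‖Sbar ω - μs‖ ^ 2 ∂P
        = ∫ ω, ((R : ℝ)⁻¹) ^ 2 * ‖∑ r, X r ω‖ ^ 2 ∂P := by
          refine integral_congr_ae (Filter.Eventually.of_forall fun ω => ?_)
          show ‖Sbar ω - μs‖ ^ 2 = ((R : ℝ)⁻¹) ^ 2 * ‖∑ r, X r ω‖ ^ 2
          rw [hdiff ω, norm_smul, mul_pow]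
          congr 1
          rw [Real.norm_eq_abs, abs_of_nonneg (by positivity)]
      _ = ((R : ℝ)⁻¹) ^ 2 * ∫ ω, ‖∑ r, X r ω‖ ^ 2 ∂P := integral_const_mul _ _
      _ ≤ ((R : ℝ)⁻¹) ^ 2 * ((R : ℝ) * (σ ^ 2 / b)) :=
          mul_le_mul_of_nonneg_left hsum2 (by positivity)
      _ = σ ^ 2 / (b * R) := by field_simp
  have hA : ‖μbar - μs‖ ≤ κ := by
    have h1 : μbar - μs = (R : ℝ)⁻¹ • ∑ r : ι, (μbar - μ r) := by
      rw [hμs, Finset.sum_sub_distrib, smul_sub, Finset.sum_const, Finset.card_univ,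
        ← Nat.cast_smul_eq_nsmul ℝ, smul_smul]
      norm_num [← hR, inv_mul_cancel₀ hR0.ne']
    calc ‖μbar - μs‖ = (R : ℝ)⁻¹ * ‖∑ r : ι, (μbar - μ r)‖ := by
          rw [h1, norm_smul, Real.norm_eq_abs, abs_of_nonneg (by positivity)]
      _ ≤ (R : ℝ)⁻¹ * ∑ r : ι, ‖μbar - μ r‖ :=
          mul_le_mul_of_nonneg_left (norm_sum_le _ _) (by positivity)
      _ ≤ (R : ℝ)⁻¹ * ∑ _r : ι, κ := by
          refine mul_le_mul_of_nonneg_left (Finset.sum_le_sum fun r _ => ?_) (by positivity)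
          rw [norm_sub_rev]; exact hdis r
      _ = κ := by
          rw [Finset.sum_const, Finset.card_univ, nsmul_eq_mul, ← hR, ← mul_assoc,
            inv_mul_cancel₀ hR0.ne', one_mul]
  -- pointwise bound
  have hpt : ∀ ω, ‖μbar - ghat ω‖ ^ 2 ≤
      3 * κ ^ 2 + 3 * ‖Sbar ω - μs‖ ^ 2 + 3 * Υ ^ 2 := by
    intro ω
    have hdecomp : μbar - ghat ω =
        (μbar - μs) + (μs - Sbar ω) + (Sbar ω - ghat ω) := by abel
    have h1 : ‖μbar - ghat ω‖ ≤ ‖μbar - μs‖ + ‖μs - Sbar ω‖ + ‖Sbar ω - ghat ω‖ := by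
      rw [hdecomp]; exact norm_add₃_le
    have h2 : ‖μs - Sbar ω‖ = ‖Sbar ω - μs‖ := norm_sub_rev _ _
    have h3 : ‖Sbar ω - ghat ω‖ ≤ Υ := by
      rw [norm_sub_rev]; exact hghat ω
    have h4 : ‖μbar - ghat ω‖ ≤ κ + ‖Sbar ω - μs‖ + Υ := by
      rw [h2] at h1; linarith [norm_nonneg (μbar - μs)]
    nlinarith [h4, norm_nonneg (μbar - ghat ω), norm_nonneg (Sbar ω - μs), hκ.le, hΥ.le,
      sq_nonneg (κ - ‖Sbar ω - μs‖), sq_nonneg (κ - Υ), sq_nonneg (‖Sbar ω - μs‖ - Υ)]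
  -- integrability
  have hSbarL2 : MemLp Sbar 2 P := by
    refine MemLp.const_smul (f := fun ω => ∑ r, g r ω) ?_ (R : ℝ)⁻¹
    have h := memLp_finset_sum' (μ := P) Finset.univ (fun r (_ : r ∈ Finset.univ) => hL2 r)
    have he : (∑ r : ι, g r) = fun ω => ∑ r : ι, g r ω := by
      funext ω; simp
    rwa [he] at h
  have hdghat : MemLp (fun ω => ghat ω - Sbar ω) 2 P :=
    MemLp.of_bound (hmeas.sub hSbarL2.aestronglyMeasurable) Υ
      (Filter.Eventually.of_forall fun ω => hghat ω)
  have hghatL2 : MemLp ghat 2 P := by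
    have h := hdghat.add hSbarL2
    have he : ((fun ω => ghat ω - Sbar ω) + Sbar) = ghat := by
      funext ω; simp
    rwa [he] at h
  have hdiffL2 : MemLp (fun ω => μbar - ghat ω) 2 P := (memLp_const μbar).sub hghatL2
  have hLHS : Integrable (fun ω => ‖μbar - ghat ω‖ ^ 2) P :=
    (memLp_two_iff_integrable_sq_norm hdiffL2.aestronglyMeasurable).mp hdiffL2
  have hSmμL2 : MemLp (fun ω => Sbar ω - μs) 2 P := hSbarL2.sub (memLp_const _)
  have hBint : Integrable (fun ω => ‖Sbar ω - μs‖ ^ 2) P :=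
    (memLp_two_iff_integrable_sq_norm hSmμL2.aestronglyMeasurable).mp hSmμL2
  have hint1 : Integrable (fun ω => 3 * κ ^ 2 + 3 * ‖Sbar ω - μs‖ ^ 2) P :=
    (integrable_const _).add (hBint.const_mul 3)
  have hRHSint : Integrable
      (fun ω => 3 * κ ^ 2 + 3 * ‖Sbar ω - μs‖ ^ 2 + 3 * Υ ^ 2) P :=
    hint1.add (integrable_const _)
  calc ∫ ω, ‖μbar - ghat ω‖ ^ 2 ∂P
      ≤ ∫ ω, (3 * κ ^ 2 + 3 * ‖Sbar ω - μs‖ ^ 2 + 3 * Υ ^ 2) ∂P :=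
        integral_mono hLHS hRHSint hpt
    _ = 3 * κ ^ 2 + 3 * (∫ ω, ‖Sbar ω - μs‖ ^ 2 ∂P) + 3 * Υ ^ 2 := by
        rw [integral_add hint1 (integrable_const _),
          integral_add (integrable_const _) (hBint.const_mul 3),
          integral_const, integral_const, integral_const_mul]
        simp
    _ ≤ 3 * κ ^ 2 + 3 * (σ ^ 2 / (b * R)) + 3 * Υ ^ 2 := by
        have := mul_le_mul_of_nonneg_left hB (by norm_num : (0:ℝ) ≤ 3)
        linarith
    _ = 3 * σ ^ 2 / (b * R) + 3 * κ ^ 2 + 3 * Υ ^ 2 := by ring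
end

section
/- Let d ≥ 1, let S be a finite nonempty index set, let σ̂, κ ≥ 0, and let (y_i)_{i∈S} and (μ_i)_{i∈S} be families of vectors in ℝ^d and μ̄ ∈ ℝ^d a vector with ‖μ_i − μ̄‖ ≤ κ for every i ∈ S. Suppose that for every unit vector v ∈ ℝ^d, (1/|S|) ∑_{i∈S} ⟨y_i − μ_i, v⟩² ≤ σ̂². Then for every unit vector v ∈ ℝ^d, (1/|S|) ∑_{i∈S} ⟨y_i − ȳ_S, v⟩² ≤ 6σ̂² + 16κ², where ȳ_S = (1/|S|) ∑_{i∈S} y_i is the sample mean. -/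
open scoped RealInnerProductSpace BigOperators

/-- **From concentration about individual means to concentration about the sample mean**:
a directional second-moment bound of the points `y_i` about their individual means `μ_i`
transfers to a directional second-moment bound about their common sample mean, at the cost
of the dissimilarity `κ` of the `μ_i` from a common center `μ̄`. -/
theorem stmt_4
    (d : ℕ) (hd : 0 < d)
    (ι : Type*) [Fintype ι] [Nonempty ι]
    (σhat κ : ℝ) (hσ : 0 ≤ σhat) (hκ : 0 ≤ κ)
    (y μ : ι → EuclideanSpace ℝ (Fin d))
    (μbar : EuclideanSpace ℝ (Fin d))
    (hdis : ∀ i, ‖μ i - μbar‖ ≤ κ)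
    (hconc : ∀ v : EuclideanSpace ℝ (Fin d), ‖v‖ = 1 →
      (Fintype.card ι : ℝ)⁻¹ * ∑ i, ⟪y i - μ i, v⟫ ^ 2 ≤ σhat ^ 2) :
    ∀ v : EuclideanSpace ℝ (Fin d), ‖v‖ = 1 →
      (Fintype.card ι : ℝ)⁻¹ *
          ∑ i, ⟪y i - (Fintype.card ι : ℝ)⁻¹ • ∑ j, y j, v⟫ ^ 2 ≤
        6 * σhat ^ 2 + 16 * κ ^ 2 := by
  intro v hv
  set n : ℝ := (Fintype.card ι : ℝ) with hn
  have hnpos : (0 : ℝ) < n := by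
    rw [hn]; exact_mod_cast Fintype.card_pos
  have hnne : n ≠ 0 := ne_of_gt hnpos
  set a : ι → ℝ := fun i => ⟪y i - μ i, v⟫ with ha
  set b : ι → ℝ := fun i => ⟪μ i - μbar, v⟫ with hb
  set abar : ℝ := n⁻¹ * ∑ i, a i with habar
  set bbar : ℝ := n⁻¹ * ∑ i, b i with hbbar
  -- decomposition
  have key : ∀ i, ⟪y i - n⁻¹ • ∑ j, y j, v⟫ = (a i - abar) + (b i - bbar) := by
    intro i
    simp only [ha, hb, habar, hbbar, inner_sub_left, real_inner_smul_left, sum_inner,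
      Finset.sum_sub_distrib, Finset.sum_const, Finset.card_univ, nsmul_eq_mul]
    field_simp
    ring
  -- bound on b
  have hbbound : ∀ i, |b i| ≤ κ := by
    intro i
    calc |b i| = |⟪μ i - μbar, v⟫| := rfl
      _ ≤ ‖μ i - μbar‖ * ‖v‖ := abs_real_inner_le_norm _ _
      _ ≤ κ := by rw [hv, mul_one]; exact hdis i
  have hbbarbound : |bbar| ≤ κ := by
    have h1 : |∑ i, b i| ≤ ∑ _i : ι, κ := by
      refine (Finset.abs_sum_le_sum_abs _ _).trans ?_
      exact Finset.sum_le_sum fun i _ => hbbound i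
    rw [hbbar, abs_mul, abs_inv, abs_of_pos hnpos]
    rw [Finset.sum_const, Finset.card_univ, nsmul_eq_mul] at h1
    calc n⁻¹ * |∑ i, b i| ≤ n⁻¹ * (n * κ) := by
          exact mul_le_mul_of_nonneg_left h1 (by positivity)
      _ = κ := by field_simp
  -- variance of a bounded by second moment
  have hsuma : ∑ i, a i = n * abar := by rw [habar]; field_simp
  have hvara : ∑ i, (a i - abar) ^ 2 ≤ ∑ i, a i ^ 2 := by
    have expand : ∑ i, (a i - abar) ^ 2
        = ∑ i, a i ^ 2 - 2 * abar * (∑ i, a i) + n * abar ^ 2 := by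
      have hpt : ∀ i, (a i - abar) ^ 2 = a i ^ 2 - 2 * abar * a i + abar ^ 2 :=
        fun i => by ring
      simp_rw [hpt]
      rw [Finset.sum_add_distrib, Finset.sum_sub_distrib, Finset.sum_const,
        Finset.card_univ, nsmul_eq_mul, ← Finset.mul_sum, ← hn]
    rw [expand, hsuma]
    nlinarith [sq_nonneg abar, hnpos]
  have hsuma2 : ∑ i, a i ^ 2 ≤ n * σhat ^ 2 := by
    have h2 : n⁻¹ * ∑ i, a i ^ 2 ≤ σhat ^ 2 := hconc v hv
    calc ∑ i, a i ^ 2 = n * (n⁻¹ * ∑ i, a i ^ 2) := by field_simp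
      _ ≤ n * σhat ^ 2 := mul_le_mul_of_nonneg_left h2 (le_of_lt hnpos)
  -- sum of (b i - bbar)^2 bounded
  have hvarb : ∑ i, (b i - bbar) ^ 2 ≤ n * (4 * κ ^ 2) := by
    have : ∀ i, (b i - bbar) ^ 2 ≤ 4 * κ ^ 2 := by
      intro i
      have h1 := hbbound i
      have h2 := hbbarbound
      have h3 : |b i - bbar| ≤ 2 * κ := by
        calc |b i - bbar| ≤ |b i| + |bbar| := abs_sub _ _
          _ ≤ 2 * κ := by linarith
      nlinarith [abs_nonneg (b i - bbar), sq_abs (b i - bbar)]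
    calc ∑ i, (b i - bbar) ^ 2 ≤ ∑ _i : ι, 4 * κ ^ 2 :=
          Finset.sum_le_sum fun i _ => this i
      _ = n * (4 * κ ^ 2) := by
          rw [Finset.sum_const, Finset.card_univ, nsmul_eq_mul, hn]
  -- combine
  have hmain : ∑ i, ⟪y i - n⁻¹ • ∑ j, y j, v⟫ ^ 2
      ≤ 2 * ∑ i, (a i - abar) ^ 2 + 2 * ∑ i, (b i - bbar) ^ 2 := by
    rw [Finset.mul_sum, Finset.mul_sum, ← Finset.sum_add_distrib]
    refine Finset.sum_le_sum fun i _ => ?_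
    rw [key i]
    nlinarith [sq_nonneg (a i - abar - (b i - bbar))]
  have hfinal : ∑ i, ⟪y i - n⁻¹ • ∑ j, y j, v⟫ ^ 2
      ≤ n * (2 * σhat ^ 2 + 8 * κ ^ 2) := by nlinarith
  calc n⁻¹ * ∑ i, ⟪y i - n⁻¹ • ∑ j, y j, v⟫ ^ 2
      ≤ n⁻¹ * (n * (2 * σhat ^ 2 + 8 * κ ^ 2)) := by
        exact mul_le_mul_of_nonneg_left hfinal (by positivity)
    _ = 2 * σhat ^ 2 + 8 * κ ^ 2 := by field_simp
    _ ≤ 6 * σhat ^ 2 + 16 * κ ^ 2 := by nlinarith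
end

section
/- Let d ≥ 1, let S be a finite nonempty index set, let (g_i)_{i∈S} be vectors in ℝ^d with sample mean g_S = (1/|S|)∑_{i∈S} g_i, and let σ₀ ≥ 0 be such that for every unit vector v ∈ ℝ^d, (1/|S|) ∑_{i∈S} ⟨g_i − g_S, v⟩² ≤ σ₀². Then for every ε₁ ∈ [0, 1/2) and every nonempty subset T ⊆ S with |T| ≥ (1−ε₁)|S|, the sample mean g_T = (1/|T|)∑_{i∈T} g_i satisfies ‖g_T − g_S‖ ≤ 2σ₀√ε₁. -/
open scoped RealInnerProductSpace BigOperators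

set_option maxHeartbeats 1000000 in
/-- **Resilience of a well-concentrated set around its empirical mean**: if the
empirical directional second moment of the points `g_i`, `i ∈ S`, about their sample
mean is at most `σ₀²` in every direction, then every subset `T ⊆ S` containing at
least a `(1 − ε₁)` fraction of `S` (with `ε₁ < 1/2`) has sample mean within
`2σ₀√ε₁` of the sample mean of `S`. -/
theorem stmt_8
    (d : ℕ) (hd : 0 < d)
    (ι : Type*)
    (S : Finset ι) (hS : S.Nonempty)
    (g : ι → EuclideanSpace ℝ (Fin d))
    (σ₀ : ℝ) (hσ₀ : 0 ≤ σ₀)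
    (hconc : ∀ v : EuclideanSpace ℝ (Fin d), ‖v‖ = 1 →
      (S.card : ℝ)⁻¹ * ∑ i ∈ S, ⟪g i - (S.card : ℝ)⁻¹ • ∑ j ∈ S, g j, v⟫ ^ 2 ≤ σ₀ ^ 2) :
    ∀ ε₁ : ℝ, 0 ≤ ε₁ → ε₁ < 1 / 2 →
      ∀ T : Finset ι, T ⊆ S → T.Nonempty → (1 - ε₁) * S.card ≤ T.card →
        ‖(T.card : ℝ)⁻¹ • ∑ i ∈ T, g i - (S.card : ℝ)⁻¹ • ∑ j ∈ S, g j‖ ≤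
          2 * σ₀ * Real.sqrt ε₁ := by
  intro ε₁ hε₀ hεhalf T hTS hT hcard
  classical
  have hsqrt : 0 ≤ Real.sqrt ε₁ := Real.sqrt_nonneg _
  set μ : EuclideanSpace ℝ (Fin d) := (S.card : ℝ)⁻¹ • ∑ j ∈ S, g j with hμ
  set δ : EuclideanSpace ℝ (Fin d) := (T.card : ℝ)⁻¹ • ∑ i ∈ T, g i - μ with hδ
  have hScard : (0:ℝ) < S.card := by exact_mod_cast Finset.card_pos.mpr hS
  have hTcard : (0:ℝ) < T.card := by exact_mod_cast Finset.card_pos.mpr hT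
  by_cases hδ0 : δ = 0
  · rw [hδ0]; simp; positivity
  set v : EuclideanSpace ℝ (Fin d) := ‖δ‖⁻¹ • δ with hv
  have hvnorm : ‖v‖ = 1 := norm_smul_inv_norm hδ0
  set a : ι → ℝ := fun i => ⟪g i - μ, v⟫ with ha
  -- sum over S of centered vectors is zero
  have hsumS : ∑ i ∈ S, a i = 0 := by
    have h0 : ∑ i ∈ S, (g i - μ) = 0 := by
      rw [Finset.sum_sub_distrib, Finset.sum_const, hμ,
        ← Nat.cast_smul_eq_nsmul ℝ, smul_smul,
        mul_inv_cancel₀ (ne_of_gt hScard), one_smul, sub_self]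
    calc ∑ i ∈ S, a i = ⟪∑ i ∈ S, (g i - μ), v⟫ := by rw [sum_inner]
    _ = 0 := by rw [h0, inner_zero_left]
  have hδeq : δ = (T.card : ℝ)⁻¹ • ∑ i ∈ T, (g i - μ) := by
    rw [Finset.sum_sub_distrib, smul_sub, Finset.sum_const,
      ← Nat.cast_smul_eq_nsmul ℝ, smul_smul,
      inv_mul_cancel₀ (ne_of_gt hTcard), one_smul, hδ]
  -- ‖δ‖ = (1/|T|) ∑_{i∈T} a i
  have hnormδ : ‖δ‖ = (T.card : ℝ)⁻¹ * ∑ i ∈ T, a i := by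
    have h1 : ⟪δ, v⟫ = ‖δ‖⁻¹ * ‖δ‖ ^ 2 := by
      rw [hv, real_inner_smul_right, real_inner_self_eq_norm_sq]
    have h2 : ⟪δ, v⟫ = (T.card : ℝ)⁻¹ * ∑ i ∈ T, a i := by
      rw [hδeq, real_inner_smul_left, sum_inner]
    have hδn : (0:ℝ) < ‖δ‖ := norm_pos_iff.2 hδ0
    have : ‖δ‖⁻¹ * ‖δ‖ ^ 2 = ‖δ‖ := by field_simp
    rw [← h2, h1, this]
  have hsumT : ∑ i ∈ T, a i = - ∑ i ∈ S \ T, a i := by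
    have := Finset.sum_sdiff (f := a) hTS
    linarith [this]
  -- second moment bound
  have hmom : ∑ i ∈ S, a i ^ 2 ≤ (S.card : ℝ) * σ₀ ^ 2 := by
    have := hconc v hvnorm
    rw [inv_mul_le_iff₀ hScard] at this
    linarith [this]
  -- cardinality of S \ T
  have hsd : ((S \ T).card : ℝ) ≤ ε₁ * S.card := by
    have h1 : (S \ T).card = S.card - T.card := Finset.card_sdiff_of_subset hTS
    have h2 : (T.card : ℝ) ≤ S.card := by
      exact_mod_cast Finset.card_le_card hTS
    have h3 : ((S \ T).card : ℝ) = (S.card : ℝ) - T.card := by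
      rw [h1]
      rw [Nat.cast_sub (Finset.card_le_card hTS)]
    rw [h3]; nlinarith
  -- Cauchy–Schwarz
  have hCS : (∑ i ∈ S \ T, a i) ^ 2 ≤ ((S \ T).card : ℝ) * ∑ i ∈ S \ T, a i ^ 2 := by
    exact_mod_cast sq_sum_le_card_mul_sum_sq (s := S \ T) (f := a)
  have hsub : ∑ i ∈ S \ T, a i ^ 2 ≤ ∑ i ∈ S, a i ^ 2 :=
    Finset.sum_le_sum_of_subset_of_nonneg (Finset.sdiff_subset) (fun i _ _ => sq_nonneg _)
  have hkey : (∑ i ∈ T, a i) ^ 2 ≤ ε₁ * (S.card : ℝ) ^ 2 * σ₀ ^ 2 := by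
    rw [hsumT, neg_pow]
    have h1 : (∑ i ∈ S \ T, a i) ^ 2 ≤ ((S \ T).card : ℝ) * ((S.card : ℝ) * σ₀ ^ 2) := by
      calc (∑ i ∈ S \ T, a i) ^ 2 ≤ ((S \ T).card : ℝ) * ∑ i ∈ S \ T, a i ^ 2 := hCS
      _ ≤ ((S \ T).card : ℝ) * ((S.card : ℝ) * σ₀ ^ 2) := by
          apply mul_le_mul_of_nonneg_left (le_trans hsub hmom) (Nat.cast_nonneg _)
    have h2 := mul_le_mul_of_nonneg_right hsd (mul_nonneg hScard.le (sq_nonneg σ₀))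
    norm_num
    linarith [h1, h2]
  -- |T| ≥ |S|/2
  have hThalf : (S.card : ℝ) ≤ 2 * T.card := by
    nlinarith [mul_le_mul_of_nonneg_right hεhalf.le hScard.le]
  -- finish: compare squares
  have hgoal_sq : ‖δ‖ ^ 2 ≤ (2 * σ₀ * Real.sqrt ε₁) ^ 2 := by
    have hε₁sq : Real.sqrt ε₁ ^ 2 = ε₁ := Real.sq_sqrt hε₀
    rw [hnormδ, mul_pow]
    have h1 : ((T.card : ℝ)⁻¹) ^ 2 * (∑ i ∈ T, a i) ^ 2 ≤
        ((T.card : ℝ)⁻¹) ^ 2 * (ε₁ * (S.card : ℝ) ^ 2 * σ₀ ^ 2) :=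
      mul_le_mul_of_nonneg_left hkey (sq_nonneg _)
    have h2 : ((T.card : ℝ)⁻¹) ^ 2 * (ε₁ * (S.card : ℝ) ^ 2 * σ₀ ^ 2) ≤
        4 * σ₀ ^ 2 * ε₁ := by
      rw [inv_pow, inv_mul_le_iff₀ (pow_pos hTcard 2)]
      have hS2T : (S.card : ℝ) ^ 2 ≤ 4 * (T.card : ℝ) ^ 2 := by
        have h4 := mul_self_le_mul_self hScard.le hThalf
        nlinarith [h4]
      have h3 := mul_le_mul_of_nonneg_left hS2T (mul_nonneg hε₀ (sq_nonneg σ₀))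
      linarith [h3]
    calc ((T.card : ℝ)⁻¹) ^ 2 * (∑ i ∈ T, a i) ^ 2 ≤ 4 * σ₀ ^ 2 * ε₁ := le_trans h1 h2
    _ = (2 * σ₀ * Real.sqrt ε₁) ^ 2 := by rw [mul_pow, mul_pow, hε₁sq]; ring
  nlinarith [norm_nonneg δ, mul_nonneg (mul_nonneg (by norm_num : (0:ℝ) ≤ 2) hσ₀) hsqrt]
end

section
/- Let d ≥ 1, let S be a finite nonempty index set, let σ, κ, Υ ≥ 0 and b ≥ 1 be an integer. For each r ∈ S let n_r ≥ b be an integer and let u_{r,1}, …, u_{r,n_r} be vectors in ℝ^d with mean ū_r = (1/n_r)∑_{i=1}^{n_r} u_{r,i} satisfying (1/n_r) ∑_{i=1}^{n_r} ‖u_{r,i} − ū_r‖² ≤ σ². Let μ̄ ∈ ℝ^d satisfy ‖ū_r − μ̄‖ ≤ κ for every r ∈ S. For each r ∈ S let B_r ⊆ {1,…,n_r} be an arbitrary subset with |B_r| = b and set g_r = (1/b)∑_{i∈B_r} u_{r,i}, and let ĝ ∈ ℝ^d satisfy ‖ĝ − (1/|S|)∑_{r∈S} g_r‖ ≤ Υ.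 Then ‖μ̄ − ĝ‖ ≤ (max_{r∈S} n_r)·σ/b + κ + Υ. -/
open scoped BigOperators

/-- **Deterministic (worst-case over mini-batch choices) deviation bound of the robust
gradient estimate from the true global gradient**:
`‖μ̄ − ĝ‖ ≤ (max_{r∈S} n_r)·σ/b + κ + Υ`. -/
theorem stmt_9
    (d : ℕ) (hd : 0 < d)
    (ι : Type*) (S : Finset ι) (hS : S.Nonempty)
    (σ κ Υ : ℝ) (hσ : 0 ≤ σ) (hκ : 0 ≤ κ) (hΥ : 0 ≤ Υ)
    (b : ℕ) (hb : 1 ≤ b)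
    (n : ι → ℕ) (hn : ∀ r ∈ S, b ≤ n r)
    (u : (r : ι) → Fin (n r) → EuclideanSpace ℝ (Fin d))
    (ubar : ι → EuclideanSpace ℝ (Fin d))
    (hubar : ∀ r ∈ S, ubar r = (n r : ℝ)⁻¹ • ∑ i, u r i)
    (hvar : ∀ r ∈ S, (n r : ℝ)⁻¹ * ∑ i, ‖u r i - ubar r‖ ^ 2 ≤ σ ^ 2)
    (μbar : EuclideanSpace ℝ (Fin d)) (hdis : ∀ r ∈ S, ‖ubar r - μbar‖ ≤ κ)
    (B : (r : ι) → Finset (Fin (n r))) (hB : ∀ r ∈ S, (B r).card = b)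
    (g : ι → EuclideanSpace ℝ (Fin d))
    (hg : ∀ r ∈ S, g r = (b : ℝ)⁻¹ • ∑ i ∈ B r, u r i)
    (ghat : EuclideanSpace ℝ (Fin d))
    (hghat : ‖ghat - (S.card : ℝ)⁻¹ • ∑ r ∈ S, g r‖ ≤ Υ) :
    ‖μbar - ghat‖ ≤ ((S.sup' hS n : ℕ) : ℝ) * σ / b + κ + Υ := by
  have hb0 : (0:ℝ) < (b:ℝ) := by exact_mod_cast hb
  set N : ℕ := S.sup' hS n with hN
  -- per-worker bound : ‖g r - ubar r‖ ≤ n r * σ / b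
  have key : ∀ r ∈ S, ‖g r - ubar r‖ ≤ (n r : ℝ) * σ / b := by
    intro r hr
    have hnb : b ≤ n r := hn r hr
    have hnr0 : (0:ℝ) < (n r : ℝ) := by
      have : 0 < n r := lt_of_lt_of_le hb hnb
      exact_mod_cast this
    -- sum of norms bound via Cauchy-Schwarz (Chebyshev form)
    have hsumsq : ∑ i, ‖u r i - ubar r‖ ^ 2 ≤ (n r : ℝ) * σ ^ 2 := by
      have := hvar r hr
      rw [inv_mul_le_iff₀ hnr0] at this
      linarith [this]
    have hcs : (∑ i, ‖u r i - ubar r‖) ^ 2 ≤ (n r : ℝ) * ∑ i, ‖u r i - ubar r‖ ^ 2 := by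
      have := sq_sum_le_card_mul_sum_sq (s := (Finset.univ : Finset (Fin (n r))))
        (f := fun i => ‖u r i - ubar r‖)
      simpa using this
    have hsn0 : (0:ℝ) ≤ ∑ i, ‖u r i - ubar r‖ :=
      Finset.sum_nonneg fun i _ => norm_nonneg _
    have hsum : ∑ i, ‖u r i - ubar r‖ ≤ (n r : ℝ) * σ := by
      have h2 : (∑ i, ‖u r i - ubar r‖) ^ 2 ≤ ((n r : ℝ) * σ) ^ 2 := by
        calc (∑ i, ‖u r i - ubar r‖) ^ 2 ≤ (n r : ℝ) * ∑ i, ‖u r i - ubar r‖ ^ 2 := hcs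
          _ ≤ (n r : ℝ) * ((n r : ℝ) * σ ^ 2) := by
              exact mul_le_mul_of_nonneg_left hsumsq hnr0.le
          _ = ((n r : ℝ) * σ) ^ 2 := by ring
      have hns : (0:ℝ) ≤ (n r : ℝ) * σ := mul_nonneg hnr0.le hσ
      nlinarith
    -- rewrite g r - ubar r
    have hrw : g r - ubar r = (b : ℝ)⁻¹ • ∑ i ∈ B r, (u r i - ubar r) := by
      rw [hg r hr, Finset.sum_sub_distrib, smul_sub, Finset.sum_const, hB r hr,
        ← Nat.cast_smul_eq_nsmul ℝ, smul_smul, inv_mul_cancel₀ hb0.ne', one_smul]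
    rw [hrw, norm_smul, norm_inv, Real.norm_natCast]
    rw [inv_mul_le_iff₀ hb0] -- goal: ‖∑‖ ≤ n σ / b * b
    calc ‖∑ i ∈ B r, (u r i - ubar r)‖ ≤ ∑ i ∈ B r, ‖u r i - ubar r‖ :=
          norm_sum_le _ _
      _ ≤ ∑ i, ‖u r i - ubar r‖ :=
          Finset.sum_le_sum_of_subset_of_nonneg (Finset.subset_univ _)
            (fun i _ _ => norm_nonneg _)
      _ ≤ (n r : ℝ) * σ := hsum
      _ = (b:ℝ) * ((n r : ℝ) * σ / b) := by field_simp
  have hNr : ∀ r ∈ S, (n r : ℝ) ≤ (N : ℝ) := fun r hr => by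
    exact_mod_cast Finset.le_sup' n hr
  -- per-worker bound to μbar
  have key2 : ∀ r ∈ S, ‖μbar - g r‖ ≤ (N : ℝ) * σ / b + κ := by
    intro r hr
    calc ‖μbar - g r‖ = ‖(μbar - ubar r) + (ubar r - g r)‖ := by congr 1; abel
      _ ≤ ‖μbar - ubar r‖ + ‖ubar r - g r‖ := norm_add_le _ _
      _ ≤ κ + (n r : ℝ) * σ / b := by
          gcongr
          · rw [norm_sub_rev]; exact hdis r hr
          · rw [norm_sub_rev]; exact key r hr
      _ ≤ (N : ℝ) * σ / b + κ := by
          have := hNr r hr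
          have : (n r : ℝ) * σ / b ≤ (N : ℝ) * σ / b := by gcongr
          linarith
  -- average
  have hScard : (0:ℝ) < (S.card : ℝ) := by exact_mod_cast hS.card_pos
  have havg : ‖μbar - (S.card : ℝ)⁻¹ • ∑ r ∈ S, g r‖ ≤ (N : ℝ) * σ / b + κ := by
    have hrw : μbar - (S.card : ℝ)⁻¹ • ∑ r ∈ S, g r
        = (S.card : ℝ)⁻¹ • ∑ r ∈ S, (μbar - g r) := by
      rw [Finset.sum_sub_distrib, smul_sub, Finset.sum_const,
        ← Nat.cast_smul_eq_nsmul ℝ, smul_smul, inv_mul_cancel₀ hScard.ne', one_smul]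
    rw [hrw, norm_smul, norm_inv, Real.norm_natCast, inv_mul_le_iff₀ hScard]
    calc ‖∑ r ∈ S, (μbar - g r)‖ ≤ ∑ r ∈ S, ‖μbar - g r‖ := norm_sum_le _ _
      _ ≤ ∑ _r ∈ S, ((N : ℝ) * σ / b + κ) := Finset.sum_le_sum key2
      _ = (S.card:ℝ) * ((N : ℝ) * σ / b + κ) := by
          rw [Finset.sum_const, nsmul_eq_mul]
  calc ‖μbar - ghat‖
      = ‖(μbar - (S.card : ℝ)⁻¹ • ∑ r ∈ S, g r) - (ghat - (S.card : ℝ)⁻¹ • ∑ r ∈ S, g r)‖ := by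
        congr 1; abel
    _ ≤ ‖μbar - (S.card : ℝ)⁻¹ • ∑ r ∈ S, g r‖ + ‖ghat - (S.card : ℝ)⁻¹ • ∑ r ∈ S, g r‖ :=
        norm_sub_le _ _
    _ ≤ ((N : ℝ) * σ / b + κ) + Υ := add_le_add havg hghat
    _ = (N : ℝ) * σ / b + κ + Υ := by ring
end
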